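/- For every n ≥ 1, the function σ_n : {1, …, 2^n} → P([n]) defined by t ∈ σ_n(i) if and only if |({1} ∪ [n−t+2, n]) \ r_n^{−1}(i)| is odd, is a bijection and satisfies: (a) σ_n(2i) = [n] \ σ_n(2i−1) for all 1 ≤ i ≤ 2^{n−1}; (b) 1 ∈ σ_n(2i−1) for all 1 ≤ i ≤ 2^{n−1}; and (c) whenever σ_n(i) ⇝ σ_n(j), either σ_n(j) = [n] \ σ_n(i) or j ≤ i. -/

import Mathlib

open Finset Polynomial
open scoped Classical

namespace AR

/-- `binVal I = r_n(I) - 1 = Σ_{i ∈ I} 2^(i-1)`. -/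
def binVal (I : Finset ℕ) : ℕ := ∑ i ∈ I, 2 ^ (i - 1)

lemma binVal_Icc (m : ℕ) : binVal (Finset.Icc 1 m) = 2 ^ m - 1 := by
  induction m with
  | zero => simp [binVal]
  | succ k ih =>
      rw [binVal, Finset.sum_Icc_succ_top (by omega)]
      rw [binVal] at ih
      rw [ih]
      have h1 : 1 ≤ 2 ^ k := Nat.one_le_two_pow
      simp only [Nat.add_sub_cancel, pow_succ]
      omega

lemma binVal_lt {n : ℕ} {I : Finset ℕ} (h : I ⊆ Finset.Icc 1 n) : binVal I < 2 ^ n := by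
  have h1 : binVal I ≤ binVal (Finset.Icc 1 n) :=
    Finset.sum_le_sum_of_subset h
  have h2 := binVal_Icc n
  have h3 : 1 ≤ 2 ^ n := Nat.one_le_two_pow
  omega

/-- The row/column index (zero-based, i.e. `r_n(I) - 1`) corresponding to a subset `I ⊆ [n]`. -/
def idx (n : ℕ) (I : Finset ℕ) (h : I ⊆ Finset.Icc 1 n) : Fin (2 ^ n) :=
  ⟨binVal I, binVal_lt h⟩

def blockEquiv (n : ℕ) : Fin (2 ^ n) ⊕ Fin (2 ^ n) ≃ Fin (2 ^ (n + 1)) :=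
  finSumFinEquiv.trans (finCongr (by rw [pow_succ, mul_two]))

/-- The pair of Adin–Roichman matrices `(A_n, B_n)`, defined recursively. -/
def ABpair : (n : ℕ) → Matrix (Fin (2 ^ n)) (Fin (2 ^ n)) ℤ × Matrix (Fin (2 ^ n)) (Fin (2 ^ n)) ℤ
  | 0 => (Matrix.of fun _ _ => 1, Matrix.of fun _ _ => 1)
  | n + 1 =>
      let p := ABpair n
      ((Matrix.reindex (blockEquiv n) (blockEquiv n)) (Matrix.fromBlocks p.1 p.1 p.1 (-p.2)),
       (Matrix.reindex (blockEquiv n) (blockEquiv n)) (Matrix.fromBlocks p.1 p.1 0 (-p.2)))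

def A (n : ℕ) : Matrix (Fin (2 ^ n)) (Fin (2 ^ n)) ℤ := (ABpair n).1

def B (n : ℕ) : Matrix (Fin (2 ^ n)) (Fin (2 ^ n)) ℤ := (ABpair n).2

/-- `R` is a (nonempty) integer interval. -/
def IsInterval (R : Finset ℕ) : Prop := ∃ a b : ℕ, R = Finset.Icc a b

/-- `R` is a run of `I`: a maximal nonempty interval contained in `I`. -/
def IsRun (I R : Finset ℕ) : Prop :=
  R.Nonempty ∧ IsInterval R ∧ R ⊆ I ∧
    ∀ S : Finset ℕ, IsInterval S → S ⊆ I → R ⊆ S → S = R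

/-- `R` is a prefix of `S` : `min R = min S` and `R ⊆ S`. -/
def IsPrefixOf (R S : Finset ℕ) : Prop := R.min = S.min ∧ R ⊆ S

/-- `I ≫ J` : every run of `I ∩ J` is a prefix of a run of `I`. -/
def Gg (I J : Finset ℕ) : Prop :=
  ∀ R : Finset ℕ, IsRun (I ∩ J) R → ∃ S : Finset ℕ, IsRun I S ∧ IsPrefixOf R S

/-- The set of runs of `I`. -/
noncomputable def runs (I : Finset ℕ) : Finset (Finset ℕ) :=
  I.powerset.filter (fun R => IsRun I R)

/-- `π(I)`: the product of (size + 1) over the runs of `I`. -/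
noncomputable def piFun (I : Finset ℕ) : ℕ := ∏ R ∈ runs I, (R.card + 1)

/-- `π'_n(I)`: the product of (size + 1) over the runs of `I` not containing `n`. -/
noncomputable def piFun' (n : ℕ) (I : Finset ℕ) : ℕ :=
  ∏ R ∈ (runs I).filter (fun R => n ∉ R), (R.card + 1)

/-- The subset of `[n]` encoded by a zero-based index `i : Fin (2^n)` (binary digits). -/
def decode (n : ℕ) (i : Fin (2 ^ n)) : Finset ℕ :=
  (Finset.Icc 1 n).filter (fun k => Nat.testBit i.val (k - 1))

/-- The matrix `U_n`, with `U_n(I,J) = 1` if `I ⊇ J` and `0` otherwise. -/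
def U (n : ℕ) : Matrix (Fin (2 ^ n)) (Fin (2 ^ n)) ℤ :=
  Matrix.of fun i j => if decode n j ⊆ decode n i then 1 else 0

/-- The matrix `V_n = U_n⁻¹`, with `V_n(I,J) = (-1)^{|I \ J|}` if `I ⊇ J` and `0` otherwise. -/
def V (n : ℕ) : Matrix (Fin (2 ^ n)) (Fin (2 ^ n)) ℤ :=
  Matrix.of fun i j =>
    if decode n j ⊆ decode n i then (-1) ^ ((decode n i) \ (decode n j)).card else 0

def A' (n : ℕ) : Matrix (Fin (2 ^ n)) (Fin (2 ^ n)) ℤ := U n * A n * V n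

def B' (n : ℕ) : Matrix (Fin (2 ^ n)) (Fin (2 ^ n)) ℤ := U n * B n * V n

/-- `E ⪯ I` : `E ⊆ I`, `E` contains no minimal element of a run of `I`,
and `E` contains no two consecutive integers. -/
def SubPrec (E I : Finset ℕ) : Prop :=
  E ⊆ I ∧ (∀ R : Finset ℕ, (h : IsRun I R) → R.min' h.1 ∉ E) ∧
    ∀ i : ℕ, ¬ (i ∈ E ∧ i + 1 ∈ E)

/-- `I ⇝ J` : `J = ([n] \ I) ∪ E` for some `E ⪯ I`. -/
def Step (n : ℕ) (I J : Finset ℕ) : Prop :=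
  ∃ E : Finset ℕ, SubPrec E I ∧ J = (Finset.Icc 1 n \ I) ∪ E

/-- `π_μ` for a composition `μ` of `n`. -/
def piComp {n : ℕ} (μ : Composition n) : ℕ := (μ.blocks.map (· + 1)).prod

/-- `π'_μ` for a composition `μ` of `n`. -/
def piComp' {n : ℕ} (μ : Composition n) : ℕ := (μ.blocks.dropLast.map (· + 1)).prod

/-- The Thue–Morse sequence: `thueMorse m = s₂(m) % 2`. -/
def thueMorse (m : ℕ) : ℕ := (Nat.digits 2 m).sum % 2

def fmap (n : ℕ) (I : Finset ℕ) : Finset ℕ :=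
  (Finset.Icc 1 n).filter
    (fun t => Odd ((insert 1 (Finset.Icc (n - t + 2) n) \ I).card))

lemma fmap_subset (n : ℕ) (I : Finset ℕ) : fmap n I ⊆ Finset.Icc 1 n :=
  Finset.filter_subset _ _

lemma mem_fmap (n : ℕ) (I : Finset ℕ) (t : ℕ) :
    t ∈ fmap n I ↔ t ∈ Finset.Icc 1 n ∧
      Odd ((insert 1 (Finset.Icc (n - t + 2) n) \ I).card) := by
  simp [fmap]

lemma fmap_one (n : ℕ) (hn : 1 ≤ n) (I : Finset ℕ) :
    1 ∈ fmap n I ↔ 1 ∉ I := by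
  rw [mem_fmap]
  have h0 : Finset.Icc (n - 1 + 2) n = ∅ := Finset.Icc_eq_empty (by omega)
  rw [h0]
  have h1 : (1:ℕ) ∈ Finset.Icc 1 n := by simp [hn]
  by_cases h : 1 ∈ I
  · have he : ({1} : Finset ℕ) \ I = ∅ := by
      ext x; simp; rintro rfl; exact h
    simp only [insert_empty_eq, he]
    simp [h]
  · have he : ({1} : Finset ℕ) \ I = {1} := by
      ext x; simp; rintro rfl; exact h
    simp only [insert_empty_eq, he]
    simp [h, h1]

lemma fmap_step (n : ℕ) (I : Finset ℕ) (t : ℕ) (h2 : 2 ≤ t) (htn : t ≤ n) :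
    ((t ∈ fmap n I) ↔ (t - 1 ∈ fmap n I)) ↔ (n - t + 2 ∈ I) := by
  have ht : t ∈ Finset.Icc 1 n := by simp; omega
  have ht' : t - 1 ∈ Finset.Icc 1 n := by simp; omega
  have hswap : insert 1 (Finset.Icc (n - t + 2) n)
      = insert (n - t + 2) (insert 1 (Finset.Icc (n - (t-1) + 2) n)) := by
    ext x; simp; omega
  have hmn : (n - t + 2) ∉ insert 1 (Finset.Icc (n - (t-1) + 2) n) := by
    simp; omega
  rw [mem_fmap, mem_fmap, hswap]
  by_cases hmI : n - t + 2 ∈ I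
  · rw [Finset.insert_sdiff_of_mem _ hmI]
    simp [ht, ht', hmI]
  · rw [Finset.insert_sdiff_of_notMem _ hmI,
      Finset.card_insert_of_notMem (fun hx => hmn (Finset.mem_sdiff.mp hx).1)]
    simp only [ht, ht', true_and, hmI, iff_false, Nat.odd_add_one]
    tauto

lemma fmap_flip (n : ℕ) (I : Finset ℕ) (hI : 1 ∉ I) :
    fmap n (insert 1 I) = Finset.Icc 1 n \ fmap n I := by
  ext t
  rw [Finset.mem_sdiff, mem_fmap, mem_fmap]
  have hsd : insert 1 (Finset.Icc (n - t + 2) n) \ insert 1 I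
      = (insert 1 (Finset.Icc (n - t + 2) n) \ I).erase 1 :=
    Finset.sdiff_insert _ _ _
  have h1mem : 1 ∈ insert 1 (Finset.Icc (n - t + 2) n) \ I := by
    simp [hI]
  rw [hsd, Finset.card_erase_of_mem h1mem]
  have hpos : 1 ≤ (insert 1 (Finset.Icc (n - t + 2) n) \ I).card :=
    Finset.card_pos.mpr ⟨1, h1mem⟩
  obtain ⟨k, hk⟩ : ∃ k, (insert 1 (Finset.Icc (n - t + 2) n) \ I).card = k + 1 :=
    ⟨_, (Nat.succ_pred_eq_of_pos hpos).symm⟩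
  rw [hk]
  simp [Nat.odd_add_one]
  tauto


lemma fmap_inj (n : ℕ) (hn : 1 ≤ n) (I I' : Finset ℕ)
    (hI : I ⊆ Finset.Icc 1 n) (hI' : I' ⊆ Finset.Icc 1 n)
    (h : fmap n I = fmap n I') : I = I' := by
  ext m
  by_cases hm : m ∈ Finset.Icc 1 n
  · rcases eq_or_ne m 1 with rfl | hm1
    · rw [← not_iff_not, ← fmap_one n hn I, ← fmap_one n hn I', h]
    · have hm2 : 2 ≤ m := by simp at hm; omega
      have hmn : m ≤ n := by simp at hm; omega
      have ht2 : 2 ≤ n - m + 2 := by omega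
      have htn : n - m + 2 ≤ n := by omega
      have hrew : n - (n - m + 2) + 2 = m := by omega
      have e1 := fmap_step n I (n - m + 2) ht2 htn
      have e2 := fmap_step n I' (n - m + 2) ht2 htn
      rw [hrew] at e1 e2
      rw [← e1, ← e2, h]
  · constructor
    · intro hmem; exact absurd (hI hmem) hm
    · intro hmem; exact absurd (hI' hmem) hm

lemma binVal_insert_one (I : Finset ℕ) (hI : 1 ∉ I) :
    binVal (insert 1 I) = 1 + binVal I := by
  rw [binVal, Finset.sum_insert hI]; rfl

lemma binVal_parity (n : ℕ) (I : Finset ℕ) (hI : I ⊆ Finset.Icc 1 n) :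
    Odd (binVal I) ↔ 1 ∈ I := by
  by_cases h : 1 ∈ I
  · have : I = insert 1 (I.erase 1) := (Finset.insert_erase h).symm
    rw [this, binVal_insert_one _ (Finset.notMem_erase 1 I)]
    have : Even (binVal (I.erase 1)) := by
      apply Finset.even_sum
      intro i hi
      have hi1 : i ≠ 1 := Finset.ne_of_mem_erase hi
      have hi2 : 1 ≤ i := by
        have := hI (Finset.mem_of_mem_erase hi); simp at this; omega
      have : ∃ k, i - 1 = k + 1 := ⟨i - 2, by omega⟩
      obtain ⟨k, hk⟩ := this
      rw [hk, pow_succ]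
      exact even_two.mul_left _
    have hodd : Odd (1 + binVal (I.erase 1)) := by
      rw [Nat.add_comm, Nat.odd_add_one, Nat.not_odd_iff_even]
      exact this
    simp [hodd]
  · have : Even (binVal I) := by
      apply Finset.even_sum
      intro i hi
      have hi2 : 1 ≤ i := by have := hI hi; simp at this; omega
      have hi1 : i ≠ 1 := fun e => h (e ▸ hi)
      obtain ⟨k, hk⟩ : ∃ k, i - 1 = k + 1 := ⟨i - 2, by omega⟩
      rw [hk, pow_succ]
      exact even_two.mul_left _
    simp [h, Nat.not_odd_iff_even.mpr this]

lemma binVal_surj (n : ℕ) : ∀ v < 2 ^ n, ∃ I ⊆ Finset.Icc 1 n, binVal I = v := by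
  induction n with
  | zero =>
      intro v hv
      interval_cases v
      exact ⟨∅, by simp, by simp [binVal]⟩

  | succ k ih =>
      intro v hv
      by_cases h : v < 2 ^ k
      · obtain ⟨I, hI, hval⟩ := ih v h
        exact ⟨I, hI.trans (Finset.Icc_subset_Icc_right (by omega)), hval⟩
      · obtain ⟨I, hI, hval⟩ := ih (v - 2 ^ k) (by rw [pow_succ] at hv; omega)
        have hnot : k + 1 ∉ I := fun hc => by
          have := hI hc; simp at this
        refine ⟨insert (k+1) I, ?_, ?_⟩
        · intro x hx
          rcases Finset.mem_insert.mp hx with rfl | hx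
          · simp
          · have := hI hx; simp at this ⊢; omega
        · rw [binVal, Finset.sum_insert hnot]
          have : binVal I = v - 2 ^ k := hval
          rw [binVal] at this
          simp only [Nat.add_sub_cancel, this]
          omega

lemma binVal_lt_binVal (n : ℕ) (I J : Finset ℕ) (hI : I ⊆ Finset.Icc 1 n)
    (hJ : J ⊆ Finset.Icc 1 n) (m0 : ℕ) (hm0I : m0 ∈ I) (hm0J : m0 ∉ J)
    (hhigh : ∀ m, m0 < m → (m ∈ I ↔ m ∈ J)) : binVal J < binVal I := by
  have hm01 : 1 ≤ m0 := by have := hI hm0I; simp at this; omega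
  have hsplitI : binVal I = ∑ i ∈ I.filter (m0 < ·), 2 ^ (i-1)
      + ∑ i ∈ I.filter (¬ m0 < ·), 2 ^ (i-1) := (Finset.sum_filter_add_sum_filter_not _ _ _).symm
  have hsplitJ : binVal J = ∑ i ∈ J.filter (m0 < ·), 2 ^ (i-1)
      + ∑ i ∈ J.filter (¬ m0 < ·), 2 ^ (i-1) := (Finset.sum_filter_add_sum_filter_not _ _ _).symm
  have hfeq : I.filter (m0 < ·) = J.filter (m0 < ·) := by
    ext x; simp only [Finset.mem_filter]
    constructor
    · rintro ⟨hx, hlt⟩; exact ⟨(hhigh x hlt).mp hx, hlt⟩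
    · rintro ⟨hx, hlt⟩; exact ⟨(hhigh x hlt).mpr hx, hlt⟩
  have hlowJ : J.filter (¬ m0 < ·) ⊆ Finset.Icc 1 (m0 - 1) := by
    intro x hx
    rw [Finset.mem_filter] at hx
    have h1 := hJ hx.1
    simp at h1 ⊢
    have : x ≠ m0 := fun e => hm0J (e ▸ hx.1)
    omega
  have hlowJle : ∑ i ∈ J.filter (¬ m0 < ·), 2 ^ (i-1) ≤ 2 ^ (m0 - 1) - 1 := by
    calc ∑ i ∈ J.filter (¬ m0 < ·), 2 ^ (i-1)
        ≤ ∑ i ∈ Finset.Icc 1 (m0 - 1), 2 ^ (i-1) := Finset.sum_le_sum_of_subset hlowJ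
      _ = 2 ^ (m0 - 1) - 1 := by
          have : binVal (Finset.Icc 1 (m0-1)) = 2 ^ (m0-1) - 1 := by
            induction (m0 - 1) with
            | zero => simp [binVal]
            | succ k ih2 =>
                rw [binVal, Finset.sum_Icc_succ_top (by omega)]
                rw [binVal] at ih2
                rw [ih2]
                have h1 : 1 ≤ 2 ^ k := Nat.one_le_two_pow
                simp only [Nat.add_sub_cancel, pow_succ]
                omega
          exact this
  have hlowIge : 2 ^ (m0 - 1) ≤ ∑ i ∈ I.filter (¬ m0 < ·), 2 ^ (i-1) := by
    have hm : m0 ∈ I.filter (¬ m0 < ·) := by simp [hm0I]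
    exact Finset.single_le_sum (f := fun i => 2 ^ (i - 1)) (fun i _ => Nat.zero_le _) hm
  have hp : 1 ≤ 2 ^ (m0 - 1) := Nat.one_le_two_pow
  rw [← hfeq] at hsplitJ
  omega


lemma prev_mem_of_subPrec (n : ℕ) (K E : Finset ℕ) (hK : K ⊆ Finset.Icc 1 n)
    (hsub : SubPrec E K) (e : ℕ) (he : e ∈ E) : e - 1 ∈ K ∧ 2 ≤ e := by
  have heK : e ∈ K := hsub.1 he
  have he1 : 1 ≤ e ∧ e ≤ n := by have := hK heK; simpa using this
  by_contra hcon
  have hprev : e - 1 ∉ K := by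
    intro hc
    have : 1 ≤ e - 1 ∧ e - 1 ≤ n := by have := hK hc; simpa using this
    exact hcon ⟨hc, by omega⟩
  -- build the run of K starting at e
  have hPex : ∃ d, e + d + 1 ∉ K := by
    refine ⟨n, fun hc => ?_⟩
    have := hK hc; simp at this
  set d0 := Nat.find hPex with hd0
  set b := e + d0 with hb
  have hmem : ∀ d, d ≤ d0 → e + d ∈ K := by
    intro d hd
    induction d with
    | zero => simpa using heK
    | succ k ih =>
        have hk : ¬ (e + k + 1 ∉ K) := Nat.find_min hPex (by omega)
        exact not_not.mp hk
  have hbK : b + 1 ∉ K := Nat.find_spec hPex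
  have hRsub : Finset.Icc e b ⊆ K := by
    intro x hx
    simp only [Finset.mem_Icc] at hx
    have := hmem (x - e) (by omega)
    have hxe : e + (x - e) = x := by omega
    rwa [hxe] at this
  have hrun : IsRun K (Finset.Icc e b) := by
    refine ⟨Finset.nonempty_Icc.mpr (by omega), ⟨e, b, rfl⟩, hRsub, ?_⟩
    rintro S ⟨a', b', rfl⟩ hSK hRS
    have heS : e ∈ Finset.Icc a' b' := hRS (by simp; omega)
    have hbS : b ∈ Finset.Icc a' b' := hRS (by simp; omega)
    simp only [Finset.mem_Icc] at heS hbS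
    have ha' : e ≤ a' := by
      by_contra h
      push_neg at h
      have : e - 1 ∈ Finset.Icc a' b' := by simp; omega
      exact hprev (hSK this)
    have hb' : b' ≤ b := by
      by_contra h
      push_neg at h
      have : b + 1 ∈ Finset.Icc a' b' := by simp; omega
      exact hbK (hSK this)
    have : a' = e := by omega
    subst this
    have : b' = b := by omega
    subst this
    rfl
  have hmin : (Finset.Icc e b).min' hrun.1 = e := by
    apply le_antisymm
    · exact Finset.min'_le _ _ (by simp; omega)
    · have := Finset.min'_mem (Finset.Icc e b) hrun.1
      simp only [Finset.mem_Icc] at this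
      exact this.1
  have := hsub.2.1 _ hrun
  rw [hmin] at this
  exact this he


set_option maxHeartbeats 1000000 in
lemma part4_aux (n : ℕ) (I J : Finset ℕ) (hI : I ⊆ Finset.Icc 1 n)
    (hJ : J ⊆ Finset.Icc 1 n) (hstep : Step n (fmap n I) (fmap n J)) :
    fmap n J = Finset.Icc 1 n \ fmap n I ∨ binVal J ≤ binVal I := by
  obtain ⟨E, hsub, hKs⟩ := hstep
  rcases Finset.eq_empty_or_nonempty E with rfl | hne
  · left; rw [hKs, Finset.union_empty]
  · right
    set e := E.min' hne with hedef
    have heE : e ∈ E := Finset.min'_mem E hne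
    have hminE : ∀ x, x < e → x ∉ E := fun x hx hc =>
      absurd (Finset.min'_le E x hc) (by omega)
    have hKsub : fmap n I ⊆ Finset.Icc 1 n := by exact fmap_subset n I
    obtain ⟨hprev, he2⟩ := prev_mem_of_subPrec n (fmap n I) E hKsub hsub e heE
    have heK : e ∈ fmap n I := hsub.1 heE
    have hen : e ≤ n := by have := hKsub heK; simp at this; omega
    have heKs : e ∈ fmap n J := by rw [hKs]; exact Finset.mem_union_right _ heE
    have he1Ks : e - 1 ∉ fmap n J := by
      rw [hKs]
      intro hc
      rcases Finset.mem_union.mp hc with hc | hc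
      · exact (Finset.mem_sdiff.mp hc).2 hprev
      · exact hminE (e - 1) (by omega) hc
    have hm0I : n - e + 2 ∈ I := by
      rw [← fmap_step n I e he2 hen]
      simp [heK, hprev]
    have hm0J : n - e + 2 ∉ J := by
      rw [← fmap_step n J e he2 hen]
      simp [heKs, he1Ks]
    have hhigh : ∀ m, n - e + 2 < m → (m ∈ I ↔ m ∈ J) := by
      intro m hm
      by_cases hmn : m ≤ n
      · have ht2 : 2 ≤ n - m + 2 := by omega
        have hte : n - m + 2 < e := by omega
        have htn : n - m + 2 ≤ n := by omega
        have hrw : n - (n - m + 2) + 2 = m := by omega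
        have e1 := fmap_step n I (n - m + 2) ht2 htn
        have e2 := fmap_step n J (n - m + 2) ht2 htn
        rw [hrw] at e1 e2
        rw [← e1, ← e2]
        set t := n - m + 2 with htdef
        have htmem : t ∈ Finset.Icc 1 n := by simp; omega
        have ht1mem : t - 1 ∈ Finset.Icc 1 n := by simp; omega
        have hKst : (t ∈ fmap n J) ↔ (t ∉ fmap n I) := by
          rw [hKs]
          simp only [Finset.mem_union, Finset.mem_sdiff]
          constructor
          · rintro (⟨-, h⟩ | h)
            · exact h
            · exact absurd h (hminE t (by omega))
          · intro h; exact Or.inl ⟨htmem, h⟩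
        have hKst1 : (t - 1 ∈ fmap n J) ↔ (t - 1 ∉ fmap n I) := by
          rw [hKs]
          simp only [Finset.mem_union, Finset.mem_sdiff]
          constructor
          · rintro (⟨-, h⟩ | h)
            · exact h
            · exact absurd h (hminE (t - 1) (by omega))
          · intro h; exact Or.inl ⟨ht1mem, h⟩
        rw [hKst, hKst1]
        exact not_iff_not.symm
      · constructor
        · intro hc; have := hI hc; simp at this; omega
        · intro hc; have := hJ hc; simp at this; omega
    exact le_of_lt (binVal_lt_binVal n I J hI hJ (n - e + 2) hm0I hm0J hhigh)



set_option maxHeartbeats 1000000 in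
theorem stmt17 (n : ℕ) (hn : 1 ≤ n) (σ : ℕ → Finset ℕ)
    (hσ : ∀ I : Finset ℕ, I ⊆ Finset.Icc 1 n →
      σ (1 + binVal I) =
        (Finset.Icc 1 n).filter
          (fun t => Odd ((insert 1 (Finset.Icc (n - t + 2) n) \ I).card))) :
    Set.BijOn σ (Set.Icc 1 (2 ^ n)) {J : Finset ℕ | J ⊆ Finset.Icc 1 n} ∧
    (∀ i : ℕ, 1 ≤ i → i ≤ 2 ^ (n - 1) → σ (2 * i) = Finset.Icc 1 n \ σ (2 * i - 1)) ∧
    (∀ i : ℕ, 1 ≤ i → i ≤ 2 ^ (n - 1) → 1 ∈ σ (2 * i - 1)) ∧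
    (∀ i j : ℕ, i ∈ Set.Icc 1 (2 ^ n) → j ∈ Set.Icc 1 (2 ^ n) →
      Step n (σ i) (σ j) → σ j = Finset.Icc 1 n \ σ i ∨ j ≤ i) := by
  have hpow : 2 * 2 ^ (n - 1) = 2 ^ n := by
    conv_rhs => rw [show n = (n - 1) + 1 by omega]
    rw [pow_succ]
    ring
  have hrep : ∀ i ∈ Set.Icc 1 (2 ^ n), ∃ I, I ⊆ Finset.Icc 1 n ∧
      1 + binVal I = i ∧ σ i = fmap n I := by
    intro i hi
    simp only [Set.mem_Icc] at hi
    obtain ⟨I, hI, hval⟩ := binVal_surj n (i - 1) (by omega)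
    refine ⟨I, hI, by omega, ?_⟩
    have hv : (1 : ℕ) + binVal I = i := by omega
    rw [← hv]
    exact hσ I hI
  have hmapsTo : Set.MapsTo σ (Set.Icc 1 (2 ^ n)) {J : Finset ℕ | J ⊆ Finset.Icc 1 n} := by
    intro i hi
    obtain ⟨I, hI, -, hfi⟩ := hrep i hi
    simp only [Set.mem_setOf_eq, hfi]
    exact fmap_subset n I
  have hinjOn : Set.InjOn σ (Set.Icc 1 (2 ^ n)) := by
    intro i hi j hj hij
    obtain ⟨I, hI, hiv, hfi⟩ := hrep i hi
    obtain ⟨J, hJ, hjv, hfj⟩ := hrep j hj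
    have hIJ : I = J := fmap_inj n hn I J hI hJ (by rw [← hfi, ← hfj, hij])
    rw [hIJ] at hiv
    omega
  have hsurjOn : Set.SurjOn σ (Set.Icc 1 (2 ^ n)) {J : Finset ℕ | J ⊆ Finset.Icc 1 n} := by
    have hTeq : {J : Finset ℕ | J ⊆ Finset.Icc 1 n} = ↑((Finset.Icc 1 n).powerset) := by
      ext J
      simp only [Set.mem_setOf_eq, Finset.coe_powerset, Set.mem_preimage,
        Set.mem_powerset_iff, ← Finset.coe_subset, Finset.coe_Icc]
    have himg : σ '' Set.Icc 1 (2 ^ n) ⊆ {J : Finset ℕ | J ⊆ Finset.Icc 1 n} :=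
      Set.mapsTo_iff_image_subset.mp hmapsTo
    have hfinT : {J : Finset ℕ | J ⊆ Finset.Icc 1 n}.Finite := by
      rw [hTeq]; exact Finset.finite_toSet _
    have hcardT : {J : Finset ℕ | J ⊆ Finset.Icc 1 n}.ncard = 2 ^ n := by
      rw [hTeq, Set.ncard_coe_finset, Finset.card_powerset, Nat.card_Icc]
      simp
    have hcardImg : (σ '' Set.Icc 1 (2 ^ n)).ncard = 2 ^ n := by
      rw [Set.ncard_image_of_injOn hinjOn, ← Finset.coe_Icc, Set.ncard_coe_finset,
        Nat.card_Icc]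
      omega
    have heq := Set.eq_of_subset_of_ncard_le himg
      (le_of_eq (by rw [hcardT, hcardImg])) hfinT
    exact heq.symm.subset
  have hpart2 : ∀ i : ℕ, 1 ≤ i → i ≤ 2 ^ (n - 1) →
      σ (2 * i) = Finset.Icc 1 n \ σ (2 * i - 1) ∧ 1 ∈ σ (2 * i - 1) := by
    intro i h1 h2
    obtain ⟨I, hI, hiv, hfi⟩ := hrep (2 * i - 1)
      (by simp only [Set.mem_Icc]; omega)
    have h1I : 1 ∉ I := by
      intro hc
      have hodd := (binVal_parity n I hI).mpr hc
      rw [Nat.odd_iff] at hodd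
      omega
    have hins : insert 1 I ⊆ Finset.Icc 1 n := by
      intro x hx
      rcases Finset.mem_insert.mp hx with rfl | hx
      · simp; omega
      · exact hI hx
    have hval2 : 1 + binVal (insert 1 I) = 2 * i := by
      rw [binVal_insert_one I h1I]; omega
    have hσ2 : σ (2 * i) = fmap n (insert 1 I) := by
      rw [← hval2]; exact hσ _ hins
    constructor
    · rw [hσ2, hfi, fmap_flip n I h1I]
    · rw [hfi]
      exact (fmap_one n hn I).mpr h1I
  refine ⟨⟨hmapsTo, hinjOn, hsurjOn⟩, fun i h1 h2 => (hpart2 i h1 h2).1,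
    fun i h1 h2 => (hpart2 i h1 h2).2, ?_⟩
  intro i j hi hj hstep
  obtain ⟨I, hI, hiv, hfi⟩ := hrep i hi
  obtain ⟨J, hJ, hjv, hfj⟩ := hrep j hj
  rw [hfi, hfj] at hstep ⊢
  rcases part4_aux n I J hI hJ hstep with h | h
  · left; exact h
  · right; omega

end AR
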